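/- Let R be an integral domain with field of fractions Q such that Q is not countably generated as an R-module. If 0 → H → F → Q → 0 is a free presentation of Q (F free), then H is a relatively divisible submodule of F but not an RD*-submodule of F. -/

import Mathlib

open Cardinal

universe u v

variable {R : Type u} [CommRing R] [IsDomain R]
variable {M : Type v} [AddCommGroup M] [Module R M]

/-- `A` is a relatively divisible (RD) submodule of `M`. -/
def IsRD (A : Submodule R M) : Prop :=
  ∀ (r : R) (m : M), r • m ∈ A → ∃ a ∈ A, r • a = r • m

/-- `A` is relatively divisible within the submodule `N` of `M`. -/
def IsRDWithin (A N : Submodule R M) : Prop :=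
  A ≤ N ∧ ∀ (r : R) (m : M), m ∈ N → r • m ∈ A → ∃ a ∈ A, r • a = r • m

/-- `A` is an RD*-submodule of `M`: RD, and every finite rank submodule of `M ⧸ A`
has a countable rank preimage. -/
def IsRDStar (A : Submodule R M) : Prop :=
  IsRD A ∧ ∀ Q : Submodule R (M ⧸ A), Module.rank R ↥Q < ℵ₀ →
    ∃ C : Submodule R M, Module.rank R ↥C ≤ ℵ₀ ∧ C.map A.mkQ = Q

/-- `A` is an RD*-submodule of the submodule `N` of `M`. -/
def IsRDStarWithin (A N : Submodule R M) : Prop :=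
  IsRDWithin A N ∧ ∀ Q : Submodule R (M ⧸ A), Q ≤ N.map A.mkQ →
    Module.rank R ↥Q < ℵ₀ →
    ∃ C : Submodule R M, C ≤ N ∧ Module.rank R ↥C ≤ ℵ₀ ∧ C.map A.mkQ = Q

/-- `A` is a direct summand of `M`. -/
def IsSummand (A : Submodule R M) : Prop :=
  ∃ P : Submodule R M, A ⊓ P = ⊥ ∧ A ⊔ P = ⊤

/-- `A` is a direct summand of the submodule `N` of `M`. -/
def IsSummandWithin (A N : Submodule R M) : Prop :=
  A ≤ N ∧ ∃ P ≤ N, A ⊓ P = ⊥ ∧ A ⊔ P = N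

/-- A G*(ℵ₀)-family of RD-submodules of `M`. -/
def IsGStarFamily (𝒢 : Set (Submodule R M)) : Prop :=
  (∀ A ∈ 𝒢, IsRD A) ∧ (⊥ : Submodule R M) ∈ 𝒢 ∧ (⊤ : Submodule R M) ∈ 𝒢 ∧
  (∀ c ⊆ 𝒢, IsChain (· ≤ ·) c → c.Nonempty → sSup c ∈ 𝒢) ∧
  ∀ C ∈ 𝒢, ∀ X : Set M, X.Countable →
    ∃ B ∈ 𝒢, C ≤ B ∧ X ⊆ ↑B ∧ Module.rank R ↥(B.map C.mkQ) ≤ ℵ₀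

/-- A G*(ℵ₀)-family of RD-submodules of the submodule `N` of `M`. -/
def IsGStarFamilyWithin (𝒢 : Set (Submodule R M)) (N : Submodule R M) : Prop :=
  (∀ A ∈ 𝒢, IsRDWithin A N) ∧ (⊥ : Submodule R M) ∈ 𝒢 ∧ N ∈ 𝒢 ∧
  (∀ c ⊆ 𝒢, IsChain (· ≤ ·) c → c.Nonempty → sSup c ∈ 𝒢) ∧
  ∀ C ∈ 𝒢, ∀ X : Set M, X ⊆ ↑N → X.Countable →
    ∃ B ∈ 𝒢, C ≤ B ∧ X ⊆ ↑B ∧ Module.rank R ↥(B.map C.mkQ) ≤ ℵ₀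

/-- `A` is ultra-balanced in `M`: an RD-submodule that is a direct summand of every
RD-submodule `C` of `M` containing `A` with `C/A` of finite rank. -/
def IsUltraBalanced (A : Submodule R M) : Prop :=
  IsRD A ∧ ∀ C : Submodule R M, IsRD C → A ≤ C →
    Module.rank R ↥(C.map A.mkQ) < ℵ₀ →
    ∃ D ≤ C, A ⊓ D = ⊥ ∧ A ⊔ D = C

/-- `N` is a direct sum of submodules of countable rank. -/
def DSumCountableRank (R : Type u) [CommRing R] (N : Type v) [AddCommGroup N]
    [Module R N] : Prop :=
  ∃ (ι : Type v) (f : ι → Submodule R N), iSupIndep f ∧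
    iSup f = ⊤ ∧ ∀ i, Module.rank R ↥(f i) ≤ ℵ₀

/-- `N` is finitely decomposable: a direct sum of finite rank submodules. -/
def FinDecomp (R : Type u) [CommRing R] (N : Type v) [AddCommGroup N]
    [Module R N] : Prop :=
  ∃ (ι : Type v) (f : ι → Submodule R N), iSupIndep f ∧
    iSup f = ⊤ ∧ ∀ i, Module.rank R ↥(f i) < ℵ₀

/-- The smallest RD-submodule of `M` containing `Y`. -/
def rdClosure (Y : Set M) : Submodule R M :=
  sInf {N : Submodule R M | IsRD N ∧ Y ⊆ ↑N}

/-- If the field of fractions `Q` of `R` is not countably generated and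
`0 → H → F → Q → 0` is a free presentation of `Q`, then `H = ker π` is RD but not RD* in `F`. -/
theorem ker_rd_not_rdStar
    (hQ : ¬ ∃ S : Set (FractionRing R), S.Countable ∧
      Submodule.span R S = (⊤ : Submodule R (FractionRing R)))
    (F : Type v) [AddCommGroup F] [Module R F] [Module.Free R F]
    (π : F →ₗ[R] FractionRing R) (hπ : Function.Surjective π) :
    IsRD (LinearMap.ker π) ∧ ¬ IsRDStar (LinearMap.ker π) := by
  classical
  have hRD : IsRD (LinearMap.ker π) := by
    intro r m hrm
    rcases eq_or_ne r 0 with rfl | hr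
    · exact ⟨0, by simp, by simp⟩
    · refine ⟨m, ?_, rfl⟩
      have h1 : r • π m = 0 := by
        simpa using hrm
      have h2 : π m = 0 := by
        have := smul_eq_zero.mp h1
        tauto
      simpa using h2
  refine ⟨hRD, ?_⟩
  rintro ⟨-, hstar⟩
  -- rank of FractionRing R over R is 1
  have hloc : IsLocalizedModule (nonZeroDivisors R)
      (LinearMap.id (R := R) (M := FractionRing R)) :=
    isLocalizedModule_id (nonZeroDivisors R) (FractionRing R) (FractionRing R)
  have hrkQ : Module.rank R (FractionRing R) = 1 := by
    have := IsLocalizedModule.rank_eq (nonZeroDivisors R)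
      (le_refl (nonZeroDivisors R)) (Algebra.linearMap R (FractionRing R))
    rw [Module.rank_self] at this
    exact this
  have e : (F ⧸ LinearMap.ker π) ≃ₗ[R] FractionRing R := π.quotKerEquivOfSurjective hπ
  have hrkT : Module.rank R (⊤ : Submodule R (F ⧸ LinearMap.ker π)) < ℵ₀ := by
    rw [rank_top]
    have := e.lift_rank_eq
    rw [hrkQ, lift_one] at this
    have h1 : Module.rank R (F ⧸ LinearMap.ker π) = 1 := by
      have := congrArg (lift.{u}) this
      simpa using this
    rw [h1]; exact one_lt_aleph0
  obtain ⟨C, hCrank, hCmap⟩ := hstar ⊤ hrkT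
  -- choose a basis of F
  obtain ⟨ι, b⟩ := Module.Free.exists_basis (R := R) (M := F)
  -- maximal independent subset of C
  obtain ⟨I, hIind, hImax⟩ := exists_maximal_linearIndepOn R (fun c : C => (c : F))
  have hIcard : #I ≤ ℵ₀ := by
    have hind : LinearIndependent R (fun x : I => (x : C)) := by
      apply LinearIndependent.of_comp (Submodule.subtype C)
      exact hIind
    exact hind.cardinal_le_rank.trans hCrank
  have hIcount : I.Countable :=
    Set.countable_coe_iff.mp (Cardinal.mk_le_aleph0_iff.mp hIcard)
  -- countable support set
  let T : Set ι := ⋃ x ∈ I, ((b.repr (x : F)).support : Set ι)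
  have hTcount : T.Countable := hIcount.biUnion fun x _ => (Finset.countable_toSet _)
  -- every element of C has support in T
  have hCT : ∀ c : C, (c : F) ∈ Submodule.span R (b '' T) := by
    intro c
    by_cases hc : c ∈ I
    · rw [b.mem_span_image]
      intro i hi
      exact Set.mem_biUnion hc (by simpa using hi)
    · obtain ⟨a, ha, haspan⟩ := hImax c hc
      have hsub : Submodule.span R ((fun c : C => (c : F)) '' I)
          ≤ Submodule.span R (b '' T) := by
        apply Submodule.span_le.mpr
        rintro _ ⟨x, hx, rfl⟩
        rw [SetLike.mem_coe, b.mem_span_image]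
        intro i hi
        exact Set.mem_biUnion hx (by simpa using hi)
      have hmem : a • (c : F) ∈ Submodule.span R (b '' T) := hsub haspan
      rw [b.mem_span_image] at hmem ⊢
      intro i hi
      apply hmem
      simp only [Finset.mem_coe, Finsupp.mem_support_iff] at hi ⊢
      rw [map_smul]
      simpa [Finsupp.smul_apply, smul_eq_mul] using
        mul_ne_zero ha hi
  -- the countable generating set of Q
  refine hQ ⟨π '' (b '' T), ((hTcount.image b).image π), ?_⟩
  apply le_antisymm le_top
  intro q _
  obtain ⟨f, hf⟩ := hπ q
  -- f's class is in image of C, so q = π c for some c ∈ C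
  have hfC : ∃ c ∈ C, π c = q := by
    have : Submodule.Quotient.mk (p := LinearMap.ker π) f ∈ Submodule.map (LinearMap.ker π).mkQ C := by
      rw [hCmap]; trivial
    obtain ⟨c, hc, hcq⟩ := this
    refine ⟨c, hc, ?_⟩
    have hfc : f - c ∈ LinearMap.ker π := by
      apply (Submodule.Quotient.eq (LinearMap.ker π)).mp
      simpa using hcq.symm
    have h2 : π f = π c := by
      have h3 := LinearMap.mem_ker.mp hfc
      rw [map_sub, sub_eq_zero] at h3
      exact h3
    rw [← hf, h2]
  obtain ⟨c, hcC, rfl⟩ := hfC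
  have := hCT ⟨c, hcC⟩
  have : π c ∈ Submodule.map π (Submodule.span R (b '' T)) :=
    ⟨c, this, rfl⟩
  rw [Submodule.map_span] at this
  exact this
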